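/- Let n ≥ 1, z ∈ C^n \ {0}, and R_{ij̄kl̄} = −(z̄ᵢ zⱼ / |z|²)δ_{kl} + δ_{ij}δ_{kl}, with R_{ij̄} = Σₖ R_{ij̄kk̄} and g_{ij̄} = δ_{ij}. Then for all indices i,j,k,l: (R_{ij̄} g_{kl̄} + R_{kj̄} g_{il̄} + R_{il̄} g_{kj̄} + R_{kl̄} g_{ij̄}) − n·(R_{ij̄kl̄} + R_{kj̄il̄} + R_{il̄kj̄} + R_{kl̄ij̄}) = 0. Consequently, if nα + β = 0, the standard Hopf metric has identically zero mixed curvature C_{α,β}, yet R is not identically zero (for n ≥ 1, R_{1̄11̄1} ≠ 0 at points with z = (t,0,...,0), t ≠ 0). -/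
import Mathlib


open BigOperators Finset

noncomputable section

namespace Stmt8

/-- Kronecker delta (= the standard metric `g_{ij̄}` in a unitary frame). -/
def g {n : ℕ} (i j : Fin n) : ℂ := if i = j then 1 else 0

/-- The Chern curvature of the standard Hopf metric in a unitary frame:
`R_{ij̄kl̄} = −(z̄ᵢ zⱼ / |z|²)·δ_{kl} + δ_{ij} δ_{kl}`. -/
def hopfR {n : ℕ} (z : Fin n → ℂ) (i j k l : Fin n) : ℂ :=
  -((starRingEnd ℂ) (z i) * z j / ((∑ m, Complex.normSq (z m) : ℝ) : ℂ)) * g k l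
    + g i j * g k l

/-- First Ricci contraction: `R_{ij̄} = ∑ₖ R_{ij̄kk̄}`. -/
def ric₁ {n : ℕ} (R : Fin n → Fin n → Fin n → Fin n → ℂ) (i j : Fin n) : ℂ :=
  ∑ k, R i j k k

/-- The coefficient `A_{ij} = −z̄ᵢzⱼ/|z|² + δ_{ij}`. -/
def A {n : ℕ} (z : Fin n → ℂ) (i j : Fin n) : ℂ :=
  -((starRingEnd ℂ) (z i) * z j / ((∑ m, Complex.normSq (z m) : ℝ) : ℂ)) + g i j

lemma hopfR_eq {n : ℕ} (z : Fin n → ℂ) (i j k l : Fin n) :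
    hopfR z i j k l = A z i j * g k l := by
  unfold hopfR A; ring

lemma ric₁_eq {n : ℕ} (z : Fin n → ℂ) (i j : Fin n) :
    ric₁ (hopfR z) i j = (n : ℂ) * A z i j := by
  unfold ric₁
  simp only [hopfR_eq]
  rw [← Finset.mul_sum]
  have h : (∑ k : Fin n, g k k) = (n : ℂ) := by simp [g]
  rw [h, mul_comm]

theorem hopf_mixed_curvature_vanishes_but_not_flat
    (n : ℕ) (hn : 1 ≤ n) (z : Fin n → ℂ) (hz : z ≠ 0) :
    (∀ i j k l : Fin n,
        (ric₁ (hopfR z) i j * g k l + ric₁ (hopfR z) k j * g i l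
            + ric₁ (hopfR z) i l * g k j + ric₁ (hopfR z) k l * g i j)
          - (n : ℂ) * (hopfR z i j k l + hopfR z k j i l + hopfR z i l k j + hopfR z k l i j)
        = 0)
      ∧ (∀ α β : ℝ, n * α + β = 0 →
          ∀ i j k l : Fin n,
            (α : ℂ) * (ric₁ (hopfR z) i j * g k l + ric₁ (hopfR z) k j * g i l
                + ric₁ (hopfR z) i l * g k j + ric₁ (hopfR z) k l * g i j)
              + (β : ℂ) * (hopfR z i j k l + hopfR z k j i l
                  + hopfR z i l k j + hopfR z k l i j)
            = 0)
      ∧ (∀ t : ℂ, t ≠ 0 → 2 ≤ n →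
          hopfR (n := n) (fun i => if i = (⟨0, hn⟩ : Fin n) then t else 0)
            ≠ fun _ _ _ _ => 0) := by
  refine ⟨?_, ?_, ?_⟩
  · intro i j k l
    simp only [hopfR_eq, ric₁_eq]
    ring
  · intro α β hab i j k l
    have hC : (n : ℂ) * (α : ℂ) + (β : ℂ) = 0 := by exact_mod_cast congrArg (Complex.ofReal) hab
    simp only [hopfR_eq, ric₁_eq]
    linear_combination (A z i j * g k l + A z k j * g i l + A z i l * g k j + A z k l * g i j) * hC
  · intro t ht h2 h
    have h1 : (⟨1, h2⟩ : Fin n) ≠ (⟨0, hn⟩ : Fin n) := by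
      simp [Fin.ext_iff]
    have := congrFun (congrFun (congrFun (congrFun h ⟨1, h2⟩) ⟨1, h2⟩) ⟨1, h2⟩) ⟨1, h2⟩
    simp [hopfR, g, h1] at this

end Stmt8
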